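/- Fix n ≥ 2 and consider the Algorithm 2 label dynamics. Suppose the initial configuration c₀ has exactly one agent labeled S, no agent labeled S', and no agent labeled R. Then in every configuration c reachable from c₀: exactly one agent has label in {S, S'}; if that agent has label S then no agent has label R; and if that agent has label S' then exactly one agent has label R. -/
import Mathlib


/-- Labels of Algorithm 2. -/
inductive Alg2.Label : Type
  | S | S' | R | u | ubar
deriving DecidableEq

/-- A configuration of the Algorithm 2 label dynamics. -/
abbrev Alg2.Config (n : ℕ) : Type := Fin n → Alg2.Label

open Alg2 in
/-- A single step of the Algorithm 2 label dynamics between a distinct initiator `i`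
and responder `j`: (S2), (S3), or a null interaction leaving the labels unchanged. -/
inductive Alg2.Step (n : ℕ) : Config n → Config n → Prop
  | s2 (c : Config n) (i j : Fin n) (hij : i ≠ j)
      (hi : c i = Label.S) (hj : c j = Label.u) :
      Step n c (Function.update (Function.update c i Label.S') j Label.R)
  | s3 (c : Config n) (i j : Fin n) (hij : i ≠ j)
      (hi : c i = Label.S') (hj : c j = Label.R) :
      Step n c (Function.update (Function.update c i Label.ubar) j Label.S)
  | null (c : Config n) : Step n c c

/-- Reachability: the reflexive–transitive closure of single steps. -/
def Alg2.Reachable (n : ℕ) : Alg2.Config n → Alg2.Config n → Prop :=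
  Relation.ReflTransGen (Alg2.Step n)

namespace Alg2Aux
open Alg2 Finset

def cnt {n : ℕ} (c : Alg2.Config n) (p : Alg2.Label → Prop) [DecidablePred p] : ℕ :=
  (Finset.univ.filter (fun i => p (c i))).card

lemma cnt_update {n : ℕ} (c : Alg2.Config n) (i : Fin n) (v : Alg2.Label)
    (p : Alg2.Label → Prop) [DecidablePred p] :
    cnt (Function.update c i v) p + (if p (c i) then 1 else 0)
      = cnt c p + (if p v then 1 else 0) := by
  classical
  unfold cnt
  rw [Finset.card_filter, Finset.card_filter]
  have h1 : (fun k => if p (Function.update c i v k) then 1 else 0)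
      = Function.update (fun k => if p (c k) then 1 else 0) i (if p v then 1 else 0) := by
    funext k
    by_cases hk : k = i
    · subst hk; simp
    · simp [Function.update_of_ne hk]
  rw [h1, Finset.sum_update_of_mem (Finset.mem_univ i),
    ← Finset.add_sum_erase _ _ (Finset.mem_univ i), Finset.sdiff_singleton_eq_erase]
  omega

abbrev pSS' : Alg2.Label → Prop := fun L => L = Label.S ∨ L = Label.S'
abbrev pR : Alg2.Label → Prop := fun L => L = Label.R
abbrev pS' : Alg2.Label → Prop := fun L => L = Label.S'

def Inv {n : ℕ} (c : Alg2.Config n) : Prop :=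
  cnt c pSS' = 1 ∧ cnt c pR = cnt c pS'

lemma step_inv {n : ℕ} {c c' : Alg2.Config n} (h : Alg2.Step n c c')
    (hc : Inv c) : Inv c' := by
  obtain ⟨h1, h2⟩ := hc
  cases h with
  | s2 i j hij hi hj =>
    have hji : j ≠ i := hij.symm
    have hcj : (Function.update c i Label.S') j = c j := Function.update_of_ne hji _ _
    have a1 := cnt_update c i Label.S' pSS'
    have a2 := cnt_update (Function.update c i Label.S') j Label.R pSS'
    have b1 := cnt_update c i Label.S' pR
    have b2 := cnt_update (Function.update c i Label.S') j Label.R pR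
    have d1 := cnt_update c i Label.S' pS'
    have d2 := cnt_update (Function.update c i Label.S') j Label.R pS'
    rw [hcj] at a2 b2 d2
    simp only [pSS', pR, pS', hi, hj] at a1 a2 b1 b2 d1 d2
    simp at a1 a2 b1 b2 d1 d2
    exact ⟨by omega, by omega⟩
  | s3 i j hij hi hj =>
    have hji : j ≠ i := hij.symm
    have hcj : (Function.update c i Label.ubar) j = c j := Function.update_of_ne hji _ _
    have a1 := cnt_update c i Label.ubar pSS'
    have a2 := cnt_update (Function.update c i Label.ubar) j Label.S pSS'
    have b1 := cnt_update c i Label.ubar pR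
    have b2 := cnt_update (Function.update c i Label.ubar) j Label.S pR
    have d1 := cnt_update c i Label.ubar pS'
    have d2 := cnt_update (Function.update c i Label.ubar) j Label.S pS'
    rw [hcj] at a2 b2 d2
    simp only [pSS', pR, pS', hi, hj] at a1 a2 b1 b2 d1 d2
    simp at a1 a2 b1 b2 d1 d2
    exact ⟨by omega, by omega⟩
  | null => exact ⟨h1, h2⟩

lemma reach_inv {n : ℕ} {c₀ c : Alg2.Config n} (h : Alg2.Reachable n c₀ c)
    (hc : Inv c₀) : Inv c := by
  induction h with
  | refl => exact hc
  | tail _ hstep ih => exact step_inv hstep ih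

end Alg2Aux

open Alg2 in
/-- If initially exactly one agent is labeled `S` and no agent is labeled `S'` or `R`,
then in every reachable configuration exactly one agent has label in `{S, S'}`; when
that label is `S` there is no `R`-labeled agent, and when it is `S'` there is exactly
one `R`-labeled agent. -/
theorem stmt11 (n : ℕ) (hn : 2 ≤ n) (c₀ c : Config n)
    (hS : (Finset.univ.filter (fun i => c₀ i = Label.S)).card = 1)
    (hS' : (Finset.univ.filter (fun i => c₀ i = Label.S')).card = 0)
    (hR : (Finset.univ.filter (fun i => c₀ i = Label.R)).card = 0)
    (hreach : Reachable n c₀ c) :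
    (Finset.univ.filter (fun i => c i = Label.S ∨ c i = Label.S')).card = 1 ∧
    ((∃ i, c i = Label.S) → (Finset.univ.filter (fun i => c i = Label.R)).card = 0) ∧
    ((∃ i, c i = Label.S') → (Finset.univ.filter (fun i => c i = Label.R)).card = 1) := by
  classical
  open Alg2Aux in
  have split : ∀ c' : Config n, cnt c' pSS' = cnt c' (fun L => L = Label.S) + cnt c' pS' := by
    intro c'
    unfold Alg2Aux.cnt
    rw [show (Finset.univ.filter (fun i => pSS' (c' i)))
        = Finset.univ.filter (fun i => c' i = Label.S) ∪
          Finset.univ.filter (fun i => c' i = Label.S') by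
      ext k; simp [pSS']]
    have hd : Disjoint (Finset.univ.filter (fun i => c' i = Label.S))
        (Finset.univ.filter (fun i => c' i = Label.S')) := by
      rw [Finset.disjoint_left]
      intro a ha hb
      simp only [Finset.mem_filter] at ha hb
      rw [ha.2] at hb
      exact absurd hb.2 (by simp)
    rw [Finset.card_union_of_disjoint hd]
  have h0 : Alg2Aux.Inv c₀ := by
    constructor
    · rw [split c₀]
      have : cnt c₀ (fun L => L = Label.S) = 1 := hS
      have h2 : cnt c₀ pS' = 0 := hS'
      omega
    · show cnt c₀ pR = cnt c₀ pS'
      have : cnt c₀ pR = 0 := hR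
      have h2 : cnt c₀ pS' = 0 := hS'
      omega
  have hc : Alg2Aux.Inv c := Alg2Aux.reach_inv hreach h0
  obtain ⟨h1, h2⟩ := hc
  refine ⟨h1, ?_, ?_⟩
  · rintro ⟨i, hi⟩
    have hge : 1 ≤ cnt c (fun L => L = Label.S) := by
      have : i ∈ Finset.univ.filter (fun k => c k = Label.S) := by simp [hi]
      exact Finset.card_pos.mpr ⟨i, this⟩
    have := split c
    have : cnt c pS' = 0 := by omega
    show cnt c pR = 0
    omega
  · rintro ⟨i, hi⟩
    have hge : 1 ≤ cnt c pS' := by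
      have : i ∈ Finset.univ.filter (fun k => c k = Label.S') := by simp [hi]
      exact Finset.card_pos.mpr ⟨i, this⟩
    have := split c
    have : cnt c pS' = 1 := by omega
    show cnt c pR = 1
    omega
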